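/- arXiv:1305.7122 — 4 statements merged into one kernel-verified Lean document; each statement's English description precedes it below -/
import Mathlib

section
/- (Equality of the sup- and inf-characterizations of the principal eigenvalue in presence of an eigenfunction.) Define $\mu_p(\mathcal{L}_\Omega + a) := \sup\{\mu : \exists \phi \in C(\bar\Omega), \phi > 0, \mathcal{L}_\Omega\phi + a\phi + \mu\phi \le 0\}$ and $\mu_p'(\mathcal{L}_\Omega + a) := \inf\{\mu : \exists \phi \in C(\bar\Omega), \phi > 0, \mathcal{L}_\Omega\phi + a\phi + \mu\phi \ge 0\}$. If $\mu_p(\mathcal{L}_\Omega + a)$ admits a positive continuous eigenfunction (i.e. $\mathcal{L}_\Omega\psi + a\psi + \mu_p\psi = 0$ for some $\psi \in C(\bar\Omega)$, $\psi > 0$), and $K$ satisfies $K(x,y) \ge c_0 > 0$ for $|x-y| < \epsilon_0$ and $\Omega$ is connected in the sense that the kernel positivity propagates, then $\mu_p(\mathcal{L}_\Omega + a) = \mu_p'(\mathcal{L}_\Omega + a)$. -/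
open MeasureTheory Set

/-- The generalized principal eigenvalue (sup-characterization). -/
noncomputable def muP {n : ℕ} (D : Set (Fin n → ℝ))
    (K : (Fin n → ℝ) → (Fin n → ℝ) → ℝ) (k a : (Fin n → ℝ) → ℝ) : ℝ :=
  sSup {μ : ℝ | ∃ φ : (Fin n → ℝ) → ℝ, ContinuousOn φ (closure D) ∧
      (∀ x ∈ closure D, 0 < φ x) ∧
      ∀ x ∈ D, (∫ y in D, K x y * φ y) - k x * φ x + a x * φ x + μ * φ x ≤ 0}

/-- The dual inf-characterization `μ_p'`. -/
noncomputable def muP' {n : ℕ} (D : Set (Fin n → ℝ))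
    (K : (Fin n → ℝ) → (Fin n → ℝ) → ℝ) (k a : (Fin n → ℝ) → ℝ) : ℝ :=
  sInf {μ : ℝ | ∃ φ : (Fin n → ℝ) → ℝ, ContinuousOn φ (closure D) ∧
      (∀ x ∈ closure D, 0 < φ x) ∧
      ∀ x ∈ D, 0 ≤ (∫ y in D, K x y * φ y) - k x * φ x + a x * φ x + μ * φ x}

/-- if `μ_p(𝓛_Ω + a)` admits a positive continuous eigenfunction and the
kernel has the local positivity property, then the sup- and inf-characterizations of
the principal eigenvalue coincide. -/
theorem stmt_5 {n : ℕ} (Ω : Set (Fin n → ℝ))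
    (hΩo : IsOpen Ω) (hΩb : Bornology.IsBounded Ω) (hΩne : Ω.Nonempty)
    (K : (Fin n → ℝ) → (Fin n → ℝ) → ℝ)
    (hKc : Continuous fun p : (Fin n → ℝ) × (Fin n → ℝ) => K p.1 p.2)
    (hKnn : ∀ x y, 0 ≤ K x y)
    (c₀ ε₀ : ℝ) (hc₀ : 0 < c₀) (hε₀ : 0 < ε₀)
    (hKpos : ∀ x ∈ Ω, ∀ y ∈ Metric.ball x ε₀, c₀ ≤ K x y)
    (k a : (Fin n → ℝ) → ℝ) (hk : ∀ x, k x = ∫ y in Ω, K y x)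
    (ha : ContinuousOn a (closure Ω))
    (ψ : (Fin n → ℝ) → ℝ) (hψc : ContinuousOn ψ (closure Ω))
    (hψpos : ∀ x ∈ closure Ω, 0 < ψ x)
    (hψeig : ∀ x ∈ Ω,
      (∫ y in Ω, K x y * ψ y) - k x * ψ x + a x * ψ x + muP Ω K k a * ψ x = 0) :
    muP Ω K k a = muP' Ω K k a := by

  classical
  set μ₀ := muP Ω K k a with hμ₀
  -- the set defining μ_p'
  set S' : Set ℝ := {μ : ℝ | ∃ φ : (Fin n → ℝ) → ℝ, ContinuousOn φ (closure Ω) ∧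
      (∀ x ∈ closure Ω, 0 < φ x) ∧
      ∀ x ∈ Ω, 0 ≤ (∫ y in Ω, K x y * φ y) - k x * φ x + a x * φ x + μ * φ x} with hS'
  have hcl : IsCompact (closure Ω) :=
    Metric.isCompact_of_isClosed_isBounded isClosed_closure hΩb.closure
  have hclne : (closure Ω).Nonempty := hΩne.closure
  have hmeas : MeasurableSet Ω := hΩo.measurableSet
  have hfin : volume Ω < ⊤ :=
    lt_of_le_of_lt (measure_mono subset_closure) hcl.measure_lt_top
  -- continuity of y ↦ K x y
  have hKx : ∀ x : Fin n → ℝ, Continuous fun y => K x y := by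
    intro x
    exact hKc.comp (Continuous.prodMk_right x)
  -- integrability helper
  have hInt : ∀ (f : (Fin n → ℝ) → ℝ), ContinuousOn f (closure Ω) →
      ∀ x : Fin n → ℝ, IntegrableOn (fun y => K x y * f y) Ω := by
    intro f hf x
    exact (((hKx x).continuousOn.mul hf).integrableOn_compact hcl).mono_set subset_closure
  -- uniform bound on ∫ K x y * ψ y
  obtain ⟨CK, hCK⟩ := (hcl.prod hcl).exists_bound_of_continuousOn hKc.continuousOn
  obtain ⟨Cψ, hCψ⟩ := hcl.exists_bound_of_continuousOn hψc
  set C : ℝ := CK * Cψ * (volume Ω).toReal with hC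
  have hBle : ∀ x : Fin n → ℝ, x ∈ closure Ω → (∫ y in Ω, K x y * ψ y) ≤ C := by
    intro x hx
    have h1 : (∫ y in Ω, K x y * ψ y) ≤ ∫ _ in Ω, CK * Cψ := by
      apply setIntegral_mono_on (hInt ψ hψc x) _ hmeas
      · intro y hy
        have hy' : y ∈ closure Ω := subset_closure hy
        have h2 : K x y ≤ CK := le_trans (le_abs_self _) (hCK (x, y) ⟨hx, hy'⟩)
        have h3 : ψ y ≤ Cψ := le_trans (le_abs_self _) (hCψ y hy')
        have h4 : 0 ≤ ψ y := le_of_lt (hψpos y hy')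
        nlinarith [hKnn x y]
      · exact integrableOn_const hfin.ne
    simpa [hC, Measure.restrict_apply_univ, measureReal_def, mul_comm, mul_assoc, mul_left_comm] using h1
  have hBnn : ∀ x : Fin n → ℝ, 0 ≤ ∫ y in Ω, K x y * ψ y := by
    intro x
    apply setIntegral_nonneg hmeas
    intro y hy
    exact mul_nonneg (hKnn x y) (le_of_lt (hψpos y (subset_closure hy)))
  have hCnn : 0 ≤ C := by
    obtain ⟨x, hx⟩ := hΩne
    exact le_trans (hBnn x) (hBle x (subset_closure hx))
  -- key: every μ ∈ S' satisfies μ₀ ≤ μ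
  have hkey : ∀ μ ∈ S', μ₀ ≤ μ := by
    intro μ hμ
    by_contra hlt
    push_neg at hlt
    obtain ⟨φ, hφc, hφpos, hφsub⟩ := hμ
    -- w = φ/ψ continuous on closure Ω
    set w : (Fin n → ℝ) → ℝ := fun x => φ x / ψ x with hw
    have hwc : ContinuousOn w (closure Ω) :=
      hφc.div hψc (fun x hx => ne_of_gt (hψpos x hx))
    obtain ⟨x₀, hx₀, hmax⟩ := hcl.exists_isMaxOn hclne hwc
    obtain ⟨z, hz, hmin⟩ := hcl.exists_isMinOn hclne hφc
    set M : ℝ := w x₀ with hM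
    have hφm : 0 < φ z := hφpos z hz
    set ε : ℝ := (μ₀ - μ) * φ z / (C + 1) with hε
    have hεpos : 0 < ε := by
      apply div_pos (mul_pos (by linarith) hφm) (by linarith)
    -- find x ∈ Ω with M - ε < w x
    have hcw : ContinuousWithinAt w Ω x₀ := (hwc x₀ hx₀).mono subset_closure
    have hnb : (nhdsWithin x₀ Ω).NeBot := mem_closure_iff_nhdsWithin_neBot.1 hx₀
    have hev : ∀ᶠ x in nhdsWithin x₀ Ω, M - ε < w x :=
      hcw.eventually (eventually_gt_nhds (by linarith))
    obtain ⟨x, hxw, hxΩ⟩ := (hev.and self_mem_nhdsWithin).exists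
    -- the pointwise inequality at x
    have hψx : 0 < ψ x := hψpos x (subset_closure hxΩ)
    have hφx : 0 < φ x := hφpos x (subset_closure hxΩ)
    have heig := hψeig x hxΩ
    have hsub := hφsub x hxΩ
    set A : ℝ := ∫ y in Ω, K x y * φ y with hA
    set B : ℝ := ∫ y in Ω, K x y * ψ y with hB
    have hstep1 : (μ₀ - μ) * φ x ≤ A - (φ x / ψ x) * B := by
      have hfield : (φ x / ψ x) * B * ψ x = φ x * B := by
        field_simp
      have e1 : 0 ≤ (A - k x * φ x + a x * φ x + μ * φ x) * ψ x := mul_nonneg hsub hψx.le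
      have e2 : (B - k x * ψ x + a x * ψ x + μ₀ * ψ x) * φ x = 0 := by rw [heig]; ring
      have h : ((μ₀ - μ) * φ x) * ψ x ≤ (A - (φ x / ψ x) * B) * ψ x := by
        have hexp : (A - (φ x / ψ x) * B) * ψ x = A * ψ x - (φ x / ψ x) * B * ψ x := by ring
        rw [hexp, hfield]
        nlinarith [e1, e2]
      exact le_of_mul_le_mul_right h hψx
    -- bound A ≤ M * B
    have hstep2 : A ≤ M * B := by
      have h1 : A ≤ ∫ y in Ω, M * (K x y * ψ y) := by
        apply setIntegral_mono_on (hInt φ hφc x) ((hInt ψ hψc x).const_mul M) hmeas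
        intro y hy
        have hy' : y ∈ closure Ω := subset_closure hy
        have hψy : 0 < ψ y := hψpos y hy'
        have hwy : w y ≤ M := hmax hy'
        have : φ y ≤ M * ψ y := by
          rw [hw] at hwy
          simp only at hwy
          rw [div_le_iff₀ hψy] at hwy
          linarith
        nlinarith [hKnn x y, this]
      rwa [integral_const_mul] at h1
    have hwxM : w x ≤ M := hmax (subset_closure hxΩ)
    have hBleC : B ≤ C := hBle x (subset_closure hxΩ)
    have hBnn' : 0 ≤ B := hBnn x
    have hφzx : φ z ≤ φ x := hmin (subset_closure hxΩ)
    have hεC : ε * (C + 1) = (μ₀ - μ) * φ z := by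
      rw [hε]; exact div_mul_cancel₀ _ (by linarith)
    -- the chain of inequalities
    have hchain : (μ₀ - μ) * φ z < (μ₀ - μ) * φ z := by
      have h1 : (μ₀ - μ) * φ z ≤ (μ₀ - μ) * φ x :=
        mul_le_mul_of_nonneg_left hφzx (by linarith only [hlt])
      have hwd : w x = φ x / ψ x := rfl
      have h2 : A - (φ x / ψ x) * B ≤ (M - w x) * B := by
        rw [hwd]; linarith only [hstep2]
      have h3 : (M - w x) * B ≤ (M - w x) * C :=
        mul_le_mul_of_nonneg_left hBleC (by linarith only [hwxM])
      have h4 : (M - w x) * C ≤ ε * C :=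
        mul_le_mul_of_nonneg_right (by linarith only [hxw]) hCnn
      have h5 : ε * C < ε * (C + 1) := by linarith only [hεpos]
      linarith only [h1, hstep1, h2, h3, h4, h5, hεC]
    exact lt_irrefl _ hchain
  -- μ₀ ∈ S'
  have hmem' : μ₀ ∈ S' := by
    refine ⟨ψ, hψc, hψpos, fun x hx => ?_⟩
    rw [hψeig x hx]
  have h1 : muP' Ω K k a = sInf S' := rfl
  rw [h1]
  apply le_antisymm
  · exact le_csInf ⟨μ₀, hmem'⟩ hkey
  · exact csInf_le ⟨μ₀, hkey⟩ hmem'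
end

section
/- (Necessary condition for existence on the refuge zone: empty-interior case.) Suppose $u \in C(\bar\Omega)$ is a positive bounded solution of $\int_\Omega K(x,y)u(y)\,dy - k(x)u(x) + a(x)u(x) - \beta(x)u(x)^p = 0$ on $\Omega$, where $\beta \ge 0$ vanishes exactly on the refuge $\omega = \{x \in \bar\Omega : \beta(x) = 0\}$, and $\omega$ has empty interior and is nonempty. If $\sup_{x\in\omega}(a(x) - k(x)) \ge 0$, then no such positive solution exists. Equivalently, existence of a positive solution forces $a(x) < k(x)$ on $\omega$ (i.e. $\sup_\omega(a - k) < 0$). -/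
open MeasureTheory Set

/-- necessary condition on the refuge zone (empty-interior case):
if `u` is a positive bounded continuous solution of the nonlocal logistic equation and
the refuge `ω = {x ∈ closure Ω | β x = 0}` is nonempty with empty interior, then
`sup_ω (a - k) < 0`, i.e. `a < k` on `ω` uniformly. -/
theorem stmt_7 {n : ℕ} (Ω : Set (Fin n → ℝ))
    (hΩo : IsOpen Ω) (hΩb : Bornology.IsBounded Ω) (hΩne : Ω.Nonempty)
    (K : (Fin n → ℝ) → (Fin n → ℝ) → ℝ)
    (hKc : Continuous fun q : (Fin n → ℝ) × (Fin n → ℝ) => K q.1 q.2)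
    (hKnn : ∀ x y, 0 ≤ K x y)
    (c₀ ε₀ : ℝ) (hc₀ : 0 < c₀) (hε₀ : 0 < ε₀)
    (hKpos : ∀ x ∈ closure Ω, ∀ y ∈ Metric.ball x ε₀, c₀ ≤ K x y)
    (k : (Fin n → ℝ) → ℝ) (hk : ∀ x, k x = ∫ y in Ω, K y x)
    (a β : (Fin n → ℝ) → ℝ)
    (ha : ContinuousOn a (closure Ω)) (hβ : ContinuousOn β (closure Ω))
    (hβnn : ∀ x ∈ closure Ω, 0 ≤ β x)
    (p : ℝ) (hp : 1 < p)
    (hωne : {x ∈ closure Ω | β x = 0}.Nonempty)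
    (hωint : interior {x ∈ closure Ω | β x = 0} = ∅)
    (u : (Fin n → ℝ) → ℝ) (huc : ContinuousOn u (closure Ω))
    (hupos : ∀ x ∈ closure Ω, 0 < u x)
    (hub : ∃ M, ∀ x ∈ closure Ω, u x ≤ M)
    (heq : ∀ x ∈ closure Ω,
      (∫ y in Ω, K x y * u y) - k x * u x + a x * u x - β x * u x ^ p = 0) :
    ∃ δ > 0, ∀ x ∈ {x ∈ closure Ω | β x = 0}, a x - k x ≤ -δ := by
  obtain ⟨M, hM⟩ := hub
  have hCc : IsCompact (closure Ω) := hΩb.isCompact_closure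
  have hCne : (closure Ω).Nonempty := hΩne.closure
  have hΩsub : Ω ⊆ closure Ω := subset_closure
  -- finite measure on Ω
  have hΩmeas : MeasurableSet Ω := hΩo.measurableSet
  have hfin : volume Ω < ⊤ := hΩb.measure_lt_top
  haveI : IsFiniteMeasure (volume.restrict Ω) :=
    ⟨by rwa [Measure.restrict_apply_univ]⟩
  -- lower bound on u
  obtain ⟨z, hzC, hzmin⟩ := hCc.exists_isMinOn hCne huc
  set m := u z with hm
  have hmpos : 0 < m := hupos z hzC
  have hMpos : 0 < M := lt_of_lt_of_le (hupos z hzC) (hM z hzC)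
  -- bound on K over compact set
  obtain ⟨q, hq, hqmax⟩ := (hCc.prod hCc).exists_isMaxOn (hCne.prod hCne)
    hKc.continuousOn
  set Ck := K q.1 q.2 with hCk
  have hKbd : ∀ x ∈ closure Ω, ∀ y ∈ closure Ω, K x y ≤ Ck := fun x hx y hy =>
    hqmax (⟨hx, hy⟩ : (x,y) ∈ (closure Ω) ×ˢ (closure Ω))
  -- the integral function F
  set F : (Fin n → ℝ) → ℝ := fun x => ∫ y in Ω, K x y * u y with hF
  have humeas : AEStronglyMeasurable u (volume.restrict Ω) :=
    (huc.mono hΩsub).aestronglyMeasurable hΩmeas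
  have hFmeas : ∀ x, AEStronglyMeasurable (fun y => K x y * u y) (volume.restrict Ω) :=
    fun x => ((hKc.comp (Continuous.prodMk_right x)).aestronglyMeasurable).mul humeas
  have hbound : ∀ x ∈ closure Ω, ∀ᵐ y ∂(volume.restrict Ω),
      ‖K x y * u y‖ ≤ Ck * M := by
    intro x hx
    filter_upwards [ae_restrict_mem hΩmeas] with y hy
    have h1 : 0 ≤ K x y := hKnn x y
    have h2 : 0 < u y := hupos y (hΩsub hy)
    rw [Real.norm_eq_abs, abs_of_nonneg (mul_nonneg h1 h2.le)]
    exact mul_le_mul (hKbd x hx y (hΩsub hy)) (hM y (hΩsub hy)) h2.le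
      (le_trans h1 (hKbd x hx y (hΩsub hy)))
  have hFcont : ContinuousOn F (closure Ω) := by
    apply continuousOn_of_dominated (fun x _ => hFmeas x) hbound
      (integrable_const _)
    filter_upwards [ae_restrict_mem hΩmeas] with y _
    exact ((hKc.comp (continuous_id.prodMk continuous_const)).mul
      continuous_const).continuousOn
  -- F is positive on closure Ω
  have hFint : ∀ x ∈ closure Ω, Integrable (fun y => K x y * u y) (volume.restrict Ω) := by
    intro x hx
    exact (integrable_const (Ck * M)).mono' (hFmeas x) (hbound x hx)
  have hFpos : ∀ x ∈ closure Ω, 0 < F x := by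
    intro x hx
    set S := Ω ∩ Metric.ball x ε₀ with hS
    have hSopen : IsOpen S := hΩo.inter Metric.isOpen_ball
    have hSne : S.Nonempty := by
      rcases Metric.mem_closure_iff.1 hx ε₀ hε₀ with ⟨b, hbΩ, hbd⟩
      exact ⟨b, hbΩ, Metric.mem_ball'.2 hbd⟩
    have hSpos : 0 < volume S := hSopen.measure_pos volume hSne
    have hSfin : volume S < ⊤ := lt_of_le_of_lt (measure_mono inter_subset_left) hfin
    have h1 : c₀ * m * (volume S).toReal ≤ ∫ y in S, K x y * u y := by
      have : (∫ _ in S, c₀ * m) ≤ ∫ y in S, K x y * u y := by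
        apply setIntegral_mono_on
        · exact integrableOn_const hSfin.ne enorm_ne_top
        · exact MeasureTheory.IntegrableOn.mono_set (hFint x hx) inter_subset_left
        · exact hSopen.measurableSet
        · intro y hy
          have hyb : y ∈ Metric.ball x ε₀ := hy.2
          have hyC : y ∈ closure Ω := hΩsub hy.1
          exact mul_le_mul (hKpos x hx y hyb) (hzmin hyC) hmpos.le
            (le_trans hc₀.le (hKpos x hx y hyb))
      rw [setIntegral_const, smul_eq_mul] at this
      calc c₀ * m * (volume S).toReal = (volume S).toReal * (c₀ * m) := by ring
        _ ≤ _ := this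
    have h2 : (∫ y in S, K x y * u y) ≤ F x := by
      apply setIntegral_mono_set (hFint x hx)
      · filter_upwards [ae_restrict_mem hΩmeas] with y hy
        exact mul_nonneg (hKnn x y) (hupos y (hΩsub hy)).le
      · exact HasSubset.Subset.eventuallyLE inter_subset_left
    have : 0 < (volume S).toReal := ENNReal.toReal_pos hSpos.ne' hSfin.ne
    nlinarith [mul_pos (mul_pos hc₀ hmpos) this]
  -- compactness of ω
  set ω := {x ∈ closure Ω | β x = 0} with hω
  have hωclosed : IsClosed ω := by
    have h : IsClosed (closure Ω ∩ β ⁻¹' {0}) :=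
      hβ.preimage_isClosed_of_isClosed isClosed_closure isClosed_singleton
    convert h using 1
    rfl
  have hωcompact : IsCompact ω := hCc.of_isClosed_subset hωclosed (fun x hx => hx.1)
  obtain ⟨x₁, hx₁ω, hx₁min⟩ := hωcompact.exists_isMinOn hωne
    (hFcont.mono (fun x hx => hx.1))
  set m₀ := F x₁ with hm₀
  have hm₀pos : 0 < m₀ := hFpos x₁ hx₁ω.1
  refine ⟨m₀ / M, div_pos hm₀pos hMpos, ?_⟩
  intro x hx
  have hxC : x ∈ closure Ω := hx.1
  have heq' := heq x hxC
  rw [hx.2] at heq'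
  have hFx : F x = (k x - a x) * u x := by
    simp only [hF]
    nlinarith [heq']
  have h1 : m₀ ≤ F x := hx₁min hx
  have h2 : u x ≤ M := hM x hxC
  have h3 : 0 < u x := hupos x hxC
  have key : (a x - k x + m₀ / M) * u x ≤ 0 := by
    have : (a x - k x) * u x = -F x := by rw [hFx]; ring
    have hdiv : m₀ / M * u x ≤ m₀ := by
      rw [div_mul_eq_mul_div, div_le_iff₀ hMpos]
      nlinarith
    nlinarith
  nlinarith [mul_pos h3 h3]
end

section
/- (Non-existence when the refuge eigenvalue is nonpositive: Fubini contradiction.) Suppose $u \in C(\bar\Omega)$ is a positive bounded solution of $\mathcal{L}_\Omega u + a u = 0$ on the refuge $\omega \subsetneq \Omega$ (i.e. $\int_\Omega K(x,y)u(y)dy - k(x)u(x) + a(x)u(x) = 0$ for $x \in \omega$), that $\phi^* \in C(\bar\omega)$ is a positive eigenfunction of the adjoint problem $\int_\omega K(y,x)\phi^*(y)dy - k(x)\phi^*(x) + a(x)\phi^*(x) = -\mu_p\phi^*(x)$ with $\mu_p \le 0$, and that $\int_\omega \phi^*(x)\int_{\Omega\setminus\omega}K(x,y)u(y)\,dy\,dx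 > 0$. Then a contradiction follows: $0 \le -\mu_p\int_\omega\phi^* u \le -\int_\omega\phi^*(x)\int_{\Omega\setminus\omega}K(x,y)u(y)\,dy\,dx < 0$. Hence no positive bounded solution of the refuge equation exists when $\mu_p(\mathcal{L}_\omega + a) \le 0$ under these hypotheses. -/
open MeasureTheory Set

/-- non-existence when the refuge eigenvalue is nonpositive (Fubini
contradiction): there is no positive bounded continuous `u` solving the linear
equation on the refuge `ω` when the adjoint problem on `ω` has a positive
eigenfunction with eigenvalue `μ_p ≤ 0` and the coupling integral is positive. -/
theorem stmt_12 {n : ℕ} (Ω ω : Set (Fin n → ℝ))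
    (hΩo : IsOpen Ω) (hΩb : Bornology.IsBounded Ω)
    (hωo : IsOpen ω) (hωΩ : ω ⊆ Ω) (hωne : ω.Nonempty)
    (hmeas : 0 < volume (Ω \ ω))
    (K : (Fin n → ℝ) → (Fin n → ℝ) → ℝ)
    (hKc : Continuous fun q : (Fin n → ℝ) × (Fin n → ℝ) => K q.1 q.2)
    (hKnn : ∀ x y, 0 ≤ K x y)
    (c₀ ε₀ : ℝ) (hc₀ : 0 < c₀) (hε₀ : 0 < ε₀)
    (hKpos : ∀ x ∈ Ω, ∀ y ∈ Metric.ball x ε₀, c₀ ≤ K x y)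
    (k a : (Fin n → ℝ) → ℝ) (hk : ∀ x, k x = ∫ y in Ω, K y x)
    (ha : ContinuousOn a (closure Ω))
    (u : (Fin n → ℝ) → ℝ) (huc : ContinuousOn u (closure Ω))
    (hupos : ∀ x ∈ closure Ω, 0 < u x)
    (hub : ∃ M, ∀ x ∈ closure Ω, u x ≤ M)
    (heq : ∀ x ∈ ω, (∫ y in Ω, K x y * u y) - k x * u x + a x * u x = 0)
    (μp : ℝ) (hμp : μp ≤ 0)
    (φs : (Fin n → ℝ) → ℝ) (hφsc : ContinuousOn φs (closure ω))
    (hφspos : ∀ x ∈ closure ω, 0 < φs x)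
    (hφseig : ∀ x ∈ ω,
      (∫ y in ω, K y x * φs y) - k x * φs x + a x * φs x = -μp * φs x)
    (hcoupling : 0 < ∫ x in ω, φs x * ∫ y in Ω \ ω, K x y * u y) :
    False := by
  classical
  -- basic topology / measurability facts
  have hωb : Bornology.IsBounded ω := hΩb.subset hωΩ
  have hΩcc : IsCompact (closure Ω) := hΩb.isCompact_closure
  have hωcc : IsCompact (closure ω) := hωb.isCompact_closure
  have hclω : closure ω ⊆ closure Ω := closure_mono hωΩ
  have hΩm : MeasurableSet Ω := hΩo.measurableSet
  have hωm : MeasurableSet ω := hωo.measurableSet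
  have hdm : MeasurableSet (Ω \ ω) := hΩm.diff hωm
  have hdb : Bornology.IsBounded (Ω \ ω) := hΩb.subset diff_subset
  have hdΩ : (Ω \ ω) ⊆ Ω := diff_subset
  -- integrability helper: continuous on closure of a bounded set ⇒ integrable on the set
  have intOn : ∀ (f : (Fin n → ℝ) → ℝ) (S : Set (Fin n → ℝ)),
      Bornology.IsBounded S → ContinuousOn f (closure S) → IntegrableOn f S volume :=
    fun f S hb hc =>
      (hc.integrableOn_compact hb.isCompact_closure).mono_set subset_closure
  -- the inner integrand is continuous on closure Ω, for each x
  have hinner : ∀ x : Fin n → ℝ, ContinuousOn (fun y => K x y * u y) (closure Ω) := by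
    intro x
    exact ((hKc.comp (Continuous.prodMk_right x)).continuousOn).mul huc
  -- product integrability
  have prodInt : ∀ (T : Set (Fin n → ℝ)), Bornology.IsBounded T → T ⊆ Ω →
      Integrable (fun p : (Fin n → ℝ) × (Fin n → ℝ) => φs p.1 * (K p.1 p.2 * u p.2))
        ((volume.restrict ω).prod (volume.restrict T)) := by
    intro T hTb hTΩ
    rw [Measure.prod_restrict, ← Measure.volume_eq_prod]
    have hcl : closure (ω ×ˢ T) ⊆ closure ω ×ˢ closure T := by
      rw [closure_prod_eq]
    have hcont : ContinuousOn
        (fun p : (Fin n → ℝ) × (Fin n → ℝ) => φs p.1 * (K p.1 p.2 * u p.2))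
        (closure ω ×ˢ closure T) := by
      apply ContinuousOn.mul
      · exact hφsc.comp continuous_fst.continuousOn (fun p hp => hp.1)
      · exact ContinuousOn.mul hKc.continuousOn
          (huc.comp continuous_snd.continuousOn
            (fun p hp => closure_mono hTΩ hp.2))
    have : IntegrableOn
        (fun p : (Fin n → ℝ) × (Fin n → ℝ) => φs p.1 * (K p.1 p.2 * u p.2))
        (closure ω ×ˢ closure T) volume :=
      hcont.integrableOn_compact (hωcc.prod hTb.isCompact_closure)
    exact this.mono_set (prod_mono subset_closure subset_closure)
  have prodIntω := prodInt ω hωb hωΩ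
  have prodIntd := prodInt (Ω \ ω) hdb hdΩ
  -- names of the main functions
  set g : (Fin n → ℝ) → ℝ := fun x => φs x * ∫ y in ω, K x y * u y with hg_def
  set h : (Fin n → ℝ) → ℝ := fun x => φs x * ∫ y in Ω \ ω, K x y * u y with hh_def
  set q : (Fin n → ℝ) → ℝ := fun x => φs x * ((k x - a x) * u x) with hq_def
  -- g, h integrable on ω
  have hg_int : IntegrableOn g ω volume := by
    have := prodIntω.integral_prod_left
    simpa [hg_def, integral_const_mul, IntegrableOn] using this
  have hh_int : IntegrableOn h ω volume := by
    have := prodIntd.integral_prod_left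
    simpa [hh_def, integral_const_mul, IntegrableOn] using this
  -- pointwise splitting of the Ω-integral on ω
  have hsplit : ∀ x ∈ ω,
      (∫ y in ω, K x y * u y) + (∫ y in Ω \ ω, K x y * u y) = (k x - a x) * u x := by
    intro x hx
    have hint1 : IntegrableOn (fun y => K x y * u y) ω volume :=
      intOn _ ω hωb ((hinner x).mono hclω)
    have hintΩ : IntegrableOn (fun y => K x y * u y) Ω volume :=
      intOn _ Ω hΩb (hinner x)
    have hint2 : IntegrableOn (fun y => K x y * u y) (Ω \ ω) volume :=
      hintΩ.mono_set diff_subset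
    have hu : (∫ y in ω ∪ (Ω \ ω), K x y * u y)
        = (∫ y in ω, K x y * u y) + ∫ y in Ω \ ω, K x y * u y :=
      setIntegral_union disjoint_sdiff_right hdm hint1 hint2
    rw [union_diff_cancel hωΩ] at hu
    have h0 := heq x hx
    nlinarith [hu, h0]
  -- so g + h = q pointwise on ω
  have hgq : ∀ x ∈ ω, g x + h x = q x := by
    intro x hx
    simp only [hg_def, hh_def, hq_def]
    rw [← mul_add, hsplit x hx]
  have hgq_ae : (fun x => g x + h x) =ᵐ[volume.restrict ω] q :=
    (ae_restrict_iff' hωm).2 (Filter.Eventually.of_forall fun x hx => hgq x hx)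
  have hq_int : IntegrableOn q ω volume := (hg_int.add hh_int).congr hgq_ae
  -- φs * u integrable on ω, with nonnegative integral
  have hφu_int : IntegrableOn (fun x => φs x * u x) ω volume :=
    intOn _ ω hωb (hφsc.mul (huc.mono hclω))
  have hI_nonneg : 0 ≤ ∫ x in ω, φs x * u x := by
    apply setIntegral_nonneg hωm
    intro x hx
    exact le_of_lt (mul_pos (hφspos x (subset_closure hx))
      (hupos x (subset_closure (hωΩ hx))))
  -- Fubini: compute ∫ g over ω
  have hFub : (∫ x in ω, g x)
      = ∫ y in ω, (∫ x in ω, K x y * φs x) * u y := by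
    have h1 : (∫ x in ω, g x)
        = ∫ x in ω, ∫ y in ω, φs x * (K x y * u y) := by
      apply setIntegral_congr_fun hωm
      intro x _
      show φs x * (∫ y in ω, K x y * u y) = ∫ y in ω, φs x * (K x y * u y)
      rw [integral_const_mul]
    have h2 : (∫ x in ω, ∫ y in ω, φs x * (K x y * u y))
        = ∫ y in ω, ∫ x in ω, φs x * (K x y * u y) :=
      integral_integral_swap prodIntω
    have h3 : (∫ y in ω, ∫ x in ω, φs x * (K x y * u y))
        = ∫ y in ω, (∫ x in ω, K x y * φs x) * u y := by
      apply setIntegral_congr_fun hωm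
      intro y _
      show (∫ x in ω, φs x * (K x y * u y)) = (∫ x in ω, K x y * φs x) * u y
      rw [← integral_mul_const]
      congr 1
      ext x
      ring
    rw [h1, h2, h3]
  -- use the adjoint eigen-equation pointwise on ω
  have heig' : ∀ y ∈ ω, (∫ x in ω, K x y * φs x) = (k y - a y - μp) * φs y := by
    intro y hy
    have := hφseig y hy
    nlinarith [this]
  have hFub2 : (∫ x in ω, g x)
      = ∫ y in ω, (q y - μp * (φs y * u y)) := by
    rw [hFub]
    apply setIntegral_congr_fun hωm
    intro y hy
    show (∫ x in ω, K x y * φs x) * u y = q y - μp * (φs y * u y)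
    rw [heig' y hy]
    simp only [hq_def]
    ring
  have hFub3 : (∫ x in ω, g x) = (∫ x in ω, q x) - μp * ∫ x in ω, φs x * u x := by
    rw [hFub2, integral_sub hq_int (hφu_int.const_mul μp), integral_const_mul]
  -- integrate g + h = q over ω
  have hsum : (∫ x in ω, g x) + (∫ x in ω, h x) = ∫ x in ω, q x := by
    rw [← integral_add hg_int hh_int]
    exact integral_congr_ae hgq_ae
  -- conclude: the coupling integral equals -μp * I ≤ 0, contradiction
  have hC : (∫ x in ω, h x) = μp * ∫ x in ω, φs x * u x := by linarith
  have : (∫ x in ω, h x) ≤ 0 := by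
    rw [hC]
    exact mul_nonpos_of_nonpos_of_nonneg hμp hI_nonneg
  exact absurd hcoupling (by simpa [hh_def] using this.not_gt)
end

section
/- (Monotonicity of positive solutions in the control parameter.) For $\lambda' \le \lambda$, if $u_{\lambda'}$ and $u_\lambda$ are the unique positive bounded continuous solutions of $\mathcal{L}_\Omega u + a_0 u + \lambda a_1 u - \beta u^p = 0$ on $\Omega$ with $a_1 \ge 0$, then $u_{\lambda'} \le u_\lambda$ pointwise. (Key step: $u_{\lambda'}$ is a subsolution of the equation at parameter $\lambda$, i.e. $\mathcal{L}_\Omega u_{\lambda'} + a_0 u_{\lambda'} + \lambda a_1 u_{\lambda'} - \beta u_{\lambda'}^p \ge 0$.) -/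
open MeasureTheory Set

lemma rpow_mvt_aux {p a b B : ℝ} (hp : 1 ≤ p) (ha : 0 ≤ a) (hab : a ≤ b) (hbB : b ≤ B) :
    b ^ p - a ^ p ≤ p * B ^ (p - 1) * (b - a) := by
  rcases eq_or_lt_of_le hab with rfl | h
  · simp
  · obtain ⟨ξ, hξ, hξeq⟩ := exists_hasDerivAt_eq_slope (fun x => x ^ p)
      (fun x => p * x ^ (p - 1)) h
      (fun x _ => (Real.hasDerivAt_rpow_const (Or.inr hp)).continuousAt.continuousWithinAt)
      (fun x _ => Real.hasDerivAt_rpow_const (Or.inr hp))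
    have hba : b - a ≠ 0 := by linarith
    have heq2 : b ^ p - a ^ p = p * ξ ^ (p - 1) * (b - a) := by
      field_simp at hξeq; linarith
    have hξ0 : 0 ≤ ξ := le_trans ha hξ.1.le
    have hξB : ξ ^ (p - 1) ≤ B ^ (p - 1) :=
      Real.rpow_le_rpow hξ0 (le_trans hξ.2.le hbB) (by linarith)
    have hp0 : (0:ℝ) ≤ p := by linarith
    have := mul_le_mul_of_nonneg_right (mul_le_mul_of_nonneg_left hξB hp0)
      (by linarith : (0:ℝ) ≤ b - a)
    linarith

set_option maxHeartbeats 2000000 in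
/-- monotonicity of positive solutions in the control parameter:
for `λ' ≤ λ`, a positive solution `u'` at parameter `λ'` is a subsolution at
parameter `λ`, and (by uniqueness of the positive solution `u` at `λ`)
`u' ≤ u` pointwise. -/
theorem stmt_13 {n : ℕ} (Ω : Set (Fin n → ℝ))
    (hΩo : IsOpen Ω) (hΩb : Bornology.IsBounded Ω) (hΩne : Ω.Nonempty)
    (K : (Fin n → ℝ) → (Fin n → ℝ) → ℝ)
    (hKc : Continuous fun q : (Fin n → ℝ) × (Fin n → ℝ) => K q.1 q.2)
    (hKnn : ∀ x y, 0 ≤ K x y)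
    (c₀ ε₀ : ℝ) (hc₀ : 0 < c₀) (hε₀ : 0 < ε₀)
    (hKpos : ∀ x ∈ Ω, ∀ y ∈ Metric.ball x ε₀, c₀ ≤ K x y)
    (k : (Fin n → ℝ) → ℝ) (hk : ∀ x, k x = ∫ y in Ω, K y x)
    (a₀ a₁ β : (Fin n → ℝ) → ℝ)
    (ha₀ : ContinuousOn a₀ (closure Ω)) (ha₁ : ContinuousOn a₁ (closure Ω))
    (hβ : ContinuousOn β (closure Ω))
    (ha₁nn : ∀ x ∈ closure Ω, 0 ≤ a₁ x) (hβpos : ∀ x ∈ closure Ω, 0 < β x)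
    (p : ℝ) (hp : 1 < p)
    (lam' lam : ℝ) (hlam : lam' ≤ lam)
    (u' u : (Fin n → ℝ) → ℝ)
    (hu'c : ContinuousOn u' (closure Ω)) (huc : ContinuousOn u (closure Ω))
    (hu'pos : ∀ x ∈ closure Ω, 0 < u' x) (hupos : ∀ x ∈ closure Ω, 0 < u x)
    (hu'b : ∃ M, ∀ x ∈ closure Ω, u' x ≤ M) (hub : ∃ M, ∀ x ∈ closure Ω, u x ≤ M)
    (heq' : ∀ x ∈ Ω, (∫ y in Ω, K x y * u' y) - k x * u' x + a₀ x * u' x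
        + lam' * a₁ x * u' x - β x * u' x ^ p = 0)
    (heq : ∀ x ∈ Ω, (∫ y in Ω, K x y * u y) - k x * u x + a₀ x * u x
        + lam * a₁ x * u x - β x * u x ^ p = 0)
    -- uniqueness of the positive bounded continuous solution at parameter `lam`
    (huniq : ∀ v : (Fin n → ℝ) → ℝ, ContinuousOn v (closure Ω) →
      (∀ x ∈ closure Ω, 0 < v x) → (∃ M, ∀ x ∈ closure Ω, v x ≤ M) →
      (∀ x ∈ Ω, (∫ y in Ω, K x y * v y) - k x * v x + a₀ x * v x
        + lam * a₁ x * v x - β x * v x ^ p = 0) →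
      ∀ x ∈ closure Ω, v x = u x) :
    (∀ x ∈ Ω, 0 ≤ (∫ y in Ω, K x y * u' y) - k x * u' x + a₀ x * u' x
        + lam * a₁ x * u' x - β x * u' x ^ p) ∧
      ∀ x ∈ closure Ω, u' x ≤ u x := by
  have hcl : IsCompact (closure Ω) := hΩb.isCompact_closure
  constructor
  · intro x hx
    have hxc : x ∈ closure Ω := subset_closure hx
    have h1 := heq' x hx
    have h2 : 0 ≤ (lam - lam') * (a₁ x * u' x) :=
      mul_nonneg (by linarith) (mul_nonneg (ha₁nn x hxc) (hu'pos x hxc).le)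
    nlinarith [h1, h2]
  · -- max of u'/u on the closure
    have hcontφ : ContinuousOn (fun x => u' x / u x) (closure Ω) :=
      hu'c.div huc (fun x hx => (hupos x hx).ne')
    obtain ⟨x₀, hx₀, hmax⟩ := hcl.exists_isMaxOn hΩne.closure hcontφ
    set θ := u' x₀ / u x₀ with hθdef
    have hθu' : ∀ x ∈ closure Ω, u' x ≤ θ * u x := by
      intro x hx
      have h := hmax hx
      have hu : 0 < u x := hupos x hx
      calc u' x = (u' x / u x) * u x := by field_simp
        _ ≤ θ * u x := mul_le_mul_of_nonneg_right h hu.le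
    by_cases hθ : θ ≤ 1
    · intro x hx
      have := hθu' x hx
      nlinarith [hupos x hx]
    · exfalso
      push_neg at hθ
      have hθ0 : (0:ℝ) < θ := by linarith
      -- integrability
      have hKx : ∀ x : Fin n → ℝ, Continuous fun y => K x y :=
        fun x => hKc.comp (Continuous.prodMk_right x)
      have hIu' : ∀ x : Fin n → ℝ, IntegrableOn (fun y => K x y * u' y) Ω volume :=
        fun x => ((((hKx x).continuousOn).mul hu'c).integrableOn_compact hcl).mono_set
          subset_closure
      have hIu : ∀ x : Fin n → ℝ, IntegrableOn (fun y => K x y * u y) Ω volume :=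
        fun x => ((((hKx x).continuousOn).mul huc).integrableOn_compact hcl).mono_set
          subset_closure
      -- bounds
      obtain ⟨Kb, hKb⟩ := (hcl.prod hcl).exists_bound_of_continuousOn hKc.continuousOn
      obtain ⟨A₀, hA₀⟩ := hcl.exists_bound_of_continuousOn ha₀
      obtain ⟨A₁, hA₁⟩ := hcl.exists_bound_of_continuousOn ha₁
      obtain ⟨Bb, hBb⟩ := hcl.exists_bound_of_continuousOn hβ
      obtain ⟨U, hU⟩ := hcl.exists_bound_of_continuousOn huc
      obtain ⟨xm, hxm, humin⟩ := hcl.exists_isMinOn hΩne.closure huc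
      obtain ⟨xb, hxb, hβmin⟩ := hcl.exists_isMinOn hΩne.closure hβ
      set um := u xm with humdef
      set βm := β xb with hβmdef
      have hum : 0 < um := hupos xm hxm
      have hβm : 0 < βm := hβpos xb hxb
      have hU0 : 0 < U := lt_of_lt_of_le hum (le_trans (le_abs_self _) (hU xm hxm))
      -- bound on k on Ω
      have hvol : volume Ω < ⊤ := hΩb.measure_lt_top
      have hkb : ∀ x ∈ Ω, k x ≤ (volume Ω).toReal * Kb := by
        intro x hx
        rw [hk x]
        have hI : IntegrableOn (fun y => K y x) Ω volume :=
          (((hKc.comp (Continuous.prodMk_left x)).continuousOn).integrableOn_compact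
            hcl).mono_set subset_closure
        calc (∫ y in Ω, K y x) ≤ ∫ _ in Ω, Kb := by
              refine setIntegral_mono_on hI (integrableOn_const hvol.ne)
                hΩo.measurableSet (fun y hy => ?_)
              exact le_trans (le_abs_self _)
                (hKb (y, x) ⟨subset_closure hy, subset_closure hx⟩)
          _ = (volume Ω).toReal * Kb := by rw [setIntegral_const]; rfl
      -- key constants
      set δ := βm * um ^ p * (θ ^ p - θ) with hδdef
      have hθp : θ < θ ^ p := by
        have := Real.rpow_lt_rpow_of_exponent_lt hθ hp
        simpa using this
      have hump : 0 < um ^ p := Real.rpow_pos_of_pos hum p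
      have hδpos : 0 < δ := by
        apply mul_pos (mul_pos hβm hump); linarith
      set C := (volume Ω).toReal * Kb + A₀ + |lam| * A₁ + Bb * (p * (θ * U) ^ (p - 1)) + 1
        with hCdef
      have hKb0 : 0 ≤ Kb := le_trans (norm_nonneg _)
        (hKb (xm, xm) ⟨hxm, hxm⟩)
      have hA₀0 : 0 ≤ A₀ := le_trans (norm_nonneg _) (hA₀ xm hxm)
      have hA₁0 : 0 ≤ A₁ := le_trans (norm_nonneg _) (hA₁ xm hxm)
      have hBb0 : 0 ≤ Bb := le_trans (norm_nonneg _) (hBb xm hxm)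
      have hBpow : 0 ≤ (θ * U) ^ (p - 1) := Real.rpow_nonneg (by positivity) _
      have hC0 : 0 < C := by
        have h1 : 0 ≤ (volume Ω).toReal * Kb := by positivity
        have h2 : 0 ≤ |lam| * A₁ := by positivity
        have h3 : 0 ≤ Bb * (p * (θ * U) ^ (p - 1)) := by
          apply mul_nonneg hBb0; apply mul_nonneg (by linarith) hBpow
        linarith
      -- the key pointwise lower bound on w = θ u - u' over Ω
      have hkey : ∀ x ∈ Ω, δ / C ≤ θ * u x - u' x := by
        intro x hx
        have hxc : x ∈ closure Ω := subset_closure hx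
        have h1 := heq' x hx
        have h2 := heq x hx
        set I1 := ∫ y in Ω, K x y * u' y with hI1
        set I2 := ∫ y in Ω, K x y * u y with hI2
        have hmono : I1 ≤ θ * I2 := by
          calc I1 ≤ ∫ y in Ω, θ * (K x y * u y) := by
                refine setIntegral_mono_on (hIu' x) ((hIu x).const_mul θ)
                  hΩo.measurableSet (fun y hy => ?_)
                have := hθu' y (subset_closure hy)
                have hK := hKnn x y
                calc K x y * u' y ≤ K x y * (θ * u y) :=
                      mul_le_mul_of_nonneg_left this hK
                  _ = θ * (K x y * u y) := by ring
            _ = θ * I2 := integral_const_mul θ _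
        -- w and pieces
        set w := θ * u x - u' x with hwdef
        have hw0 : 0 ≤ w := by have := hθu' x hxc; linarith
        have hu'0 : 0 ≤ u' x := (hu'pos x hxc).le
        have hu0 : 0 < u x := hupos x hxc
        have huU : u x ≤ U := le_trans (le_abs_self _) (hU x hxc)
        -- E3 : β u'^p - θ β u^p ≤ (k - a₀ - lam a₁) w
        have hE2 : lam' * a₁ x * u' x ≤ lam * a₁ x * u' x := by
          have : 0 ≤ a₁ x * u' x := mul_nonneg (ha₁nn x hxc) hu'0
          nlinarith
        have hE3 : β x * u' x ^ p - θ * (β x * u x ^ p) ≤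
            (k x - a₀ x - lam * a₁ x) * w := by
          have h2' : θ * I2 - θ * (k x * u x) + θ * (a₀ x * u x)
              + θ * (lam * a₁ x * u x) - θ * (β x * u x ^ p) = 0 := by
            linear_combination θ * h2
          rw [hwdef]
          linarith [hmono, h1, h2', hE2]
        -- rewrite θ^p u^p = (θ u)^p
        have hmulp : (θ * u x) ^ p = θ ^ p * u x ^ p := Real.mul_rpow hθ0.le hu0.le
        -- MVT bound : (θ u)^p - u'^p ≤ p (θU)^{p-1} w
        have hMVT : (θ * u x) ^ p - u' x ^ p ≤ p * (θ * U) ^ (p - 1) * w := by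
          have := rpow_mvt_aux (p := p) hp.le hu'0 (by linarith : u' x ≤ θ * u x)
            (by nlinarith : θ * u x ≤ θ * U)
          simpa [hwdef] using this
        have hMVTnn : 0 ≤ (θ * u x) ^ p - u' x ^ p := by
          have := Real.rpow_le_rpow hu'0 (by linarith : u' x ≤ θ * u x) (by linarith : (0:ℝ) ≤ p)
          linarith
        -- assemble : δ ≤ C * w
        have hβx : βm ≤ β x := hβmin hxc
        have hβxU : β x ≤ Bb := le_trans (le_abs_self _) (hBb x hxc)
        have humx : um ≤ u x := humin hxc
        have hupx : um ^ p ≤ u x ^ p := Real.rpow_le_rpow hum.le humx (by linarith)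
        have hcoef : (k x - a₀ x - lam * a₁ x) * w ≤
            ((volume Ω).toReal * Kb + A₀ + |lam| * A₁) * w := by
          apply mul_le_mul_of_nonneg_right _ hw0
          have hkx := hkb x hx
          have ha₀x : -a₀ x ≤ A₀ := le_trans (neg_le_abs _) (hA₀ x hxc)
          have ha₁x : -(lam * a₁ x) ≤ |lam| * A₁ := by
            have h1 : |lam * a₁ x| ≤ |lam| * A₁ := by
              rw [abs_mul]
              exact mul_le_mul_of_nonneg_left (by simpa using hA₁ x hxc) (abs_nonneg _)
            linarith [neg_le_abs (lam * a₁ x)]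
          linarith
        have hnl : β x * ((θ * u x) ^ p - u' x ^ p) ≤
            Bb * (p * (θ * U) ^ (p - 1)) * w := by
          calc β x * ((θ * u x) ^ p - u' x ^ p) ≤ Bb * ((θ * u x) ^ p - u' x ^ p) :=
                mul_le_mul_of_nonneg_right hβxU hMVTnn
            _ ≤ Bb * (p * (θ * U) ^ (p - 1) * w) := mul_le_mul_of_nonneg_left hMVT hBb0
            _ = Bb * (p * (θ * U) ^ (p - 1)) * w := by ring
        have hδle : δ ≤ C * w := by
          have hb1 : βm * um ^ p ≤ β x * u x ^ p :=
            mul_le_mul hβx hupx hump.le (hβpos x hxc).le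
          have hθpθ : (0:ℝ) ≤ θ ^ p - θ := by linarith
          have hlhs : δ ≤ β x * u x ^ p * (θ ^ p - θ) := by
            rw [hδdef]; exact mul_le_mul_of_nonneg_right hb1 hθpθ
          have h3 : β x * u x ^ p * (θ ^ p - θ) ≤
              (k x - a₀ x - lam * a₁ x) * w + β x * ((θ * u x) ^ p - u' x ^ p) := by
            rw [hmulp]; ring_nf; ring_nf at hE3; linarith [hE3]
          have h4 : (k x - a₀ x - lam * a₁ x) * w + β x * ((θ * u x) ^ p - u' x ^ p) ≤
              (((volume Ω).toReal * Kb + A₀ + |lam| * A₁) +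
                Bb * (p * (θ * U) ^ (p - 1))) * w := by
            have := hcoef; have := hnl; linarith
          have hwC : (((volume Ω).toReal * Kb + A₀ + |lam| * A₁) +
              Bb * (p * (θ * U) ^ (p - 1))) * w ≤ C * w := by
            apply mul_le_mul_of_nonneg_right _ hw0
            rw [hCdef]; linarith
          linarith
        rw [div_le_iff₀ hC0]
        linarith [hδle]
      -- contradiction at x₀
      have hwx₀ : θ * u x₀ - u' x₀ = 0 := by
        have : u x₀ ≠ 0 := (hupos x₀ hx₀).ne'
        rw [hθdef, div_mul_cancel₀ _ this, sub_self]
      have hwc : ContinuousOn (fun x => θ * u x - u' x) (closure Ω) :=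
        (continuousOn_const.mul huc).sub hu'c
      have hne : (nhdsWithin x₀ Ω).NeBot := mem_closure_iff_nhdsWithin_neBot.mp hx₀
      have hge : δ / C ≤ θ * u x₀ - u' x₀ := by
        refine ge_of_tendsto (((hwc x₀ hx₀).mono subset_closure).tendsto) ?_
        exact eventually_nhdsWithin_of_forall hkey
      rw [hwx₀] at hge
      have : 0 < δ / C := div_pos hδpos hC0
      linarith
end
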